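/- Let E₁, E₂, E₃ be Polish spaces and let f : E₂ → E₃ be a Borel measurable function. For m ∈ ℕ ∪ {∞}, let (Yᵐ, Zᵐ) be an (E₁ × E₂)-valued random variable on a probability space (Ωᵐ, ℙᵐ). Suppose that, as m → ∞, the law of (Yᵐ, Zᵐ) converges weakly to the law of (Y^∞, Z^∞), and the law of (Zᵐ, f(Zᵐ)) converges weakly to the law of (Z^∞, f(Z^∞)). Then the law of (Yᵐ, Zᵐ, f(Zᵐ)) on E₁ × E₂ × E₃ converges weakly to the law of (Y^∞, Z^∞, f(Z^∞)) as m → ∞. -/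

import Mathlib

open MeasureTheory Filter Topology
open scoped NNReal ENNReal BoundedContinuousFunction

open Set Metric

section AuxiliaryLemmas

lemma aux_tight {X : Type*} [MetricSpace X] [CompleteSpace X] [SecondCountableTopology X]
    [MeasurableSpace X] [OpensMeasurableSpace X]
    (μ : Measure X) [IsFiniteMeasure μ] {ε : ℝ≥0∞} (hε : ε ≠ 0) :
    ∃ K : Set X, IsCompact K ∧ μ Kᶜ ≤ ε := by
  rcases isEmpty_or_nonempty X with hX | hX
  · exact ⟨∅, isCompact_empty, by simp [eq_empty_of_isEmpty ((∅ : Set X)ᶜ)]⟩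
  obtain ⟨u, hu⟩ := TopologicalSpace.exists_dense_seq X
  obtain ⟨δ, δpos, hδ⟩ := ENNReal.exists_pos_sum_of_countable' hε ℕ
  set s : ℕ → ℕ → Set X := fun n k => ⋃ i ∈ Finset.range k, closedBall (u i) (1/(n+1))
  have smeas : ∀ n k, MeasurableSet (s n k) := fun n k =>
    (Finset.range k).measurableSet_biUnion (fun i _ => measurableSet_closedBall)
  have sclosed : ∀ n k, IsClosed (s n k) := fun n k =>
    isClosed_biUnion_finset (fun i _ => isClosed_closedBall)
  have smono : ∀ n, Monotone (s n) := by
    intro n k l hkl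
    exact Set.biUnion_subset_biUnion_left (by exact_mod_cast Finset.range_subset_range.2 hkl)
  have scover : ∀ n, (⋃ k, s n k) = univ := by
    intro n
    apply eq_univ_of_forall
    intro x
    have hr : (0:ℝ) < 1/(n+1) := by positivity
    obtain ⟨i, hi⟩ := hu.exists_dist_lt x hr
    refine mem_iUnion.2 ⟨i+1, ?_⟩
    refine mem_biUnion (Finset.mem_range.2 (Nat.lt_succ_self i)) ?_
    exact mem_closedBall.2 hi.le
  have key : ∀ n : ℕ, ∃ k : ℕ, μ (s n k)ᶜ ≤ δ n := by
    intro n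
    have htend : Tendsto (fun k => μ (s n k)) atTop (𝓝 (μ (⋃ k, s n k))) :=
      tendsto_measure_iUnion_atTop (smono n)
    rw [scover n] at htend
    have htend' : Tendsto (fun k => μ (s n k)ᶜ) atTop (𝓝 0) := by
      have : (fun k => μ (s n k)ᶜ) = fun k => μ univ - μ (s n k) := by
        funext k
        rw [measure_compl (smeas n k) (measure_ne_top μ _)]
      rw [this]
      have := ENNReal.Tendsto.sub (tendsto_const_nhds (x := μ univ)) htend
        (Or.inl (measure_ne_top μ _))
      simpa using this
    have := htend'.eventually_lt_const (δpos n)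
    exact ⟨this.exists.choose, le_of_lt this.exists.choose_spec⟩
  choose k hk using key
  refine ⟨⋂ n, s n (k n), ?_, ?_⟩
  · apply TotallyBounded.isCompact_of_isClosed
    · rw [Metric.totallyBounded_iff]
      intro r hr
      obtain ⟨n, hn⟩ := exists_nat_one_div_lt hr
      refine ⟨u '' (Finset.range (k n) : Set ℕ), ((Finset.range (k n)).finite_toSet).image u, ?_⟩
      intro x hx
      have hx' : x ∈ s n (k n) := mem_iInter.1 hx n
      obtain ⟨i, hi, hxi⟩ := mem_iUnion₂.1 hx'
      refine mem_biUnion (mem_image_of_mem u hi) ?_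
      exact lt_of_le_of_lt (mem_closedBall.1 hxi) hn
    · exact isClosed_iInter fun n => sclosed n (k n)
  · rw [compl_iInter]
    refine le_trans (measure_iUnion_le _) ?_
    refine le_trans (ENNReal.tsum_le_tsum (fun n => hk n)) (le_of_lt hδ)

lemma aux_inner {X : Type*} [MetricSpace X] [CompleteSpace X] [SecondCountableTopology X]
    [MeasurableSpace X] [BorelSpace X]
    (μ : Measure X) [IsFiniteMeasure μ] {A : Set X} (hA : MeasurableSet A)
    {ε : ℝ≥0∞} (hε : ε ≠ 0) :
    ∃ K, K ⊆ A ∧ IsCompact K ∧ μ A ≤ μ K + ε := by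
  have h2 : ε/2 ≠ 0 := by
    simp [ENNReal.div_eq_zero_iff, hε]
  obtain ⟨F, hFA, hFc, hF⟩ := hA.exists_isClosed_lt_add (measure_ne_top μ A) h2
  obtain ⟨K₀, hK₀c, hK₀⟩ := aux_tight μ h2
  refine ⟨F ∩ K₀, (inter_subset_left).trans hFA, hK₀c.inter_left hFc, ?_⟩
  have hsplit : μ F ≤ μ (F ∩ K₀) + μ K₀ᶜ := by
    calc μ F ≤ μ ((F ∩ K₀) ∪ K₀ᶜ) := measure_mono (by
      intro x hx
      by_cases h : x ∈ K₀
      · exact Or.inl ⟨hx, h⟩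
      · exact Or.inr h)
    _ ≤ μ (F ∩ K₀) + μ K₀ᶜ := measure_union_le _ _
  calc μ A ≤ μ F + ε/2 := hF.le
    _ ≤ (μ (F ∩ K₀) + μ K₀ᶜ) + ε/2 := by gcongr
    _ ≤ (μ (F ∩ K₀) + ε/2) + ε/2 := by gcongr
    _ = μ (F ∩ K₀) + (ε/2 + ε/2) := by ring
    _ ≤ μ (F ∩ K₀) + ε := by
        rw [ENNReal.add_halves]

lemma aux_diff {X : Type*} [MetricSpace X] [CompleteSpace X] [SecondCountableTopology X]
    [MeasurableSpace X] [BorelSpace X]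
    (μ : Measure X) [IsFiniteMeasure μ] {A : Set X} (hA : MeasurableSet A)
    {ε : ℝ≥0∞} (hε : ε ≠ 0) :
    ∃ K, K ⊆ A ∧ IsCompact K ∧ μ (A \ K) ≤ ε := by
  obtain ⟨K, hKA, hKc, hK⟩ := aux_inner μ hA hε
  refine ⟨K, hKA, hKc, ?_⟩
  rw [measure_diff hKA hKc.isClosed.measurableSet.nullMeasurableSet (measure_ne_top μ K)]
  exact tsub_le_iff_right.2 (by rwa [add_comm] at hK)

lemma aux_simple {X Y : Type*} [MetricSpace X] [CompleteSpace X] [SecondCountableTopology X]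
    [MeasurableSpace X] [BorelSpace X] [TopologicalSpace Y] [MeasurableSpace Y]
    (μ : Measure X) [IsFiniteMeasure μ] (g : SimpleFunc X Y)
    {ε : ℝ≥0∞} (hε : ε ≠ 0) :
    ∃ K : Set X, IsCompact K ∧ μ Kᶜ ≤ ε ∧ ContinuousOn g K := by
  classical
  set R := g.range with hR
  set ε' : ℝ≥0∞ := ε / (R.card + 1) with hε'
  have hε'0 : ε' ≠ 0 := by
    simp only [hε', ne_eq, ENNReal.div_eq_zero_iff]
    push_neg
    exact ⟨hε, by simp⟩
  have hfib : ∀ c : Y, MeasurableSet (g ⁻¹' {c}) := fun c => g.measurableSet_fiber c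
  choose Ks hKsub hKcomp hKdiff using fun c : Y => aux_diff μ (hfib c) hε'0
  set K : Set X := ⋃ c ∈ R, Ks c with hK
  have hKcompact : IsCompact K := R.isCompact_biUnion (fun c _ => hKcomp c)
  have hmem : ∀ x (_ : x ∈ K), g x ∈ R ∧ x ∈ Ks (g x) := by
    intro x hx
    obtain ⟨c, hcR, hxc⟩ := Set.mem_iUnion₂.1 hx
    have : g x = c := hKsub c hxc
    subst this
    exact ⟨hcR, hxc⟩
  refine ⟨K, hKcompact, ?_, ?_⟩
  · have hsub : Kᶜ ⊆ ⋃ c ∈ R, (g ⁻¹' {c} \ Ks c) := by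
      intro x hx
      have hgx : g x ∈ R := g.mem_range_self x
      refine Set.mem_biUnion hgx ⟨rfl, ?_⟩
      intro hxK
      exact hx (Set.mem_biUnion hgx hxK)
    calc μ Kᶜ ≤ ∑ c ∈ R, μ (g ⁻¹' {c} \ Ks c) :=
          le_trans (measure_mono hsub) (measure_biUnion_finset_le R _)
      _ ≤ ∑ _c ∈ R, ε' := Finset.sum_le_sum (fun c _ => hKdiff c)
      _ = R.card * ε' := by rw [Finset.sum_const, nsmul_eq_mul]
      _ ≤ (R.card + 1) * (ε / (R.card + 1)) := by gcongr <;> simp [hε']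
      _ ≤ ε := ENNReal.mul_div_le
  · intro x hx
    obtain ⟨hgR, hxK⟩ := hmem x hx
    set L : Set X := ⋃ c ∈ R.erase (g x), Ks c with hL
    have hLclosed : IsClosed L := (R.erase (g x)).isCompact_biUnion (fun c _ => hKcomp c) |>.isClosed
    have hxL : x ∉ L := by
      intro hxL
      obtain ⟨c, hcR, hxc⟩ := Set.mem_iUnion₂.1 hxL
      exact (Finset.ne_of_mem_erase hcR) ((hKsub c hxc).symm.trans rfl)
    have hnhds : Lᶜ ∈ 𝓝 x := hLclosed.isOpen_compl.mem_nhds hxL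
    have hev : ∀ᶠ y in 𝓝[K] x, g y = g x := by
      filter_upwards [mem_nhdsWithin_of_mem_nhds hnhds, self_mem_nhdsWithin] with y hyL hyK
      obtain ⟨hgyR, hyKs⟩ := hmem y hyK
      by_contra hne
      have : g y ∈ R.erase (g x) := Finset.mem_erase.2 ⟨hne, hgyR⟩
      exact hyL (Set.mem_biUnion this hyKs)
    have : ContinuousWithinAt (fun _ => g x) K x := continuousWithinAt_const
    exact this.congr_of_eventuallyEq hev rfl

lemma aux_lusin {X Y : Type*} [MetricSpace X] [CompleteSpace X] [SecondCountableTopology X]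
    [MeasurableSpace X] [BorelSpace X]
    [MetricSpace Y] [SecondCountableTopology Y] [MeasurableSpace Y] [BorelSpace Y] [Nonempty Y]
    (μ : Measure X) [IsFiniteMeasure μ] {f : X → Y} (hf : Measurable f)
    {ε : ℝ≥0∞} (hε : ε ≠ 0) :
    ∃ K : Set X, IsCompact K ∧ μ Kᶜ ≤ ε ∧ ContinuousOn f K := by
  classical
  set e3 : ℝ≥0∞ := min (ε / 3) 1 with he3
  have he3pos : 0 < e3 := lt_min (ENNReal.div_pos hε (by norm_num)) zero_lt_one
  have he3top : e3 ≠ ∞ := ne_top_of_le_ne_top ENNReal.one_ne_top (min_le_right _ _)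
  have he3le : e3 ≤ ε / 3 := min_le_left _ _
  -- simple approximating sequence
  obtain ⟨y₀⟩ := (inferInstance : Nonempty Y)
  set gs : ℕ → SimpleFunc X Y := fun n => SimpleFunc.approxOn f hf univ y₀ (mem_univ y₀) n
  have hgs_tendsto : ∀ᵐ x ∂μ, Tendsto (fun n => gs n x) atTop (𝓝 (f x)) := by
    refine ae_of_all μ (fun x => ?_)
    exact SimpleFunc.tendsto_approxOn hf (mem_univ y₀) (by simp)
  -- Egorov
  have hr : (0:ℝ) < e3.toReal := ENNReal.toReal_pos he3pos.ne' he3top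
  obtain ⟨t, htm, htμ, htu⟩ := MeasureTheory.tendstoUniformlyOn_of_ae_tendsto'
    (fun n => (gs n).stronglyMeasurable) hf.stronglyMeasurable hgs_tendsto hr
  rw [ENNReal.ofReal_toReal he3top] at htμ
  -- compact set inside tᶜ
  obtain ⟨K₀, hK₀sub, hK₀comp, hK₀diff⟩ := aux_diff μ htm.compl he3pos.ne'
  -- compact sets for each simple function
  obtain ⟨δ, δpos, hδ⟩ := ENNReal.exists_pos_sum_of_countable' he3pos.ne' ℕ
  choose Ks hKscomp hKsμ hKscont using fun n => aux_simple μ (gs n) (δpos n).ne'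
  set K : Set X := K₀ ∩ ⋂ n, Ks n with hK
  have hKcomp : IsCompact K :=
    hK₀comp.inter_right (isClosed_iInter (fun n => (hKscomp n).isClosed))
  refine ⟨K, hKcomp, ?_, ?_⟩
  · have hsub : Kᶜ ⊆ (t ∪ (tᶜ \ K₀)) ∪ ⋃ n, (Ks n)ᶜ := by
      intro x hx
      rw [hK, Set.compl_inter, Set.compl_iInter] at hx
      rcases hx with hx | hx
      · by_cases hxt : x ∈ t
        · exact Or.inl (Or.inl hxt)
        · exact Or.inl (Or.inr ⟨hxt, hx⟩)
      · exact Or.inr hx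
    calc μ Kᶜ ≤ μ (t ∪ (tᶜ \ K₀)) + μ (⋃ n, (Ks n)ᶜ) :=
          le_trans (measure_mono hsub) (measure_union_le _ _)
      _ ≤ (μ t + μ (tᶜ \ K₀)) + ∑' n, μ (Ks n)ᶜ := by
          gcongr
          exacts [measure_union_le _ _, measure_iUnion_le _]
      _ ≤ (e3 + e3) + e3 := by
          gcongr
          exact le_trans (ENNReal.tsum_le_tsum (fun n => hKsμ n)) hδ.le
      _ ≤ (ε/3 + ε/3) + ε/3 := by gcongr
      _ ≤ ε := by
          rw [ENNReal.add_thirds]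
  · have hKt : K ⊆ tᶜ := fun x hx => hK₀sub hx.1
    have huK : TendstoUniformlyOn (fun n x => gs n x) f atTop K := htu.mono hKt
    refine huK.continuousOn (Eventually.of_forall (fun n => ?_)).frequently
    exact (hKscont n).mono (fun x hx => Set.mem_iInter.1 hx.2 n)

end AuxiliaryLemmas

/-- **Lemma 3.11.** If `(Yᵐ, Zᵐ) ⇒ (Y^∞, Z^∞)` in law and `(Zᵐ, f(Zᵐ)) ⇒ (Z^∞, f(Z^∞))`
in law, where `f` is Borel measurable, then `(Yᵐ, Zᵐ, f(Zᵐ)) ⇒ (Y^∞, Z^∞, f(Z^∞))` in law.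
Weak convergence is expressed by convergence of integrals of bounded continuous functions. -/
theorem markovian_projection_stmt4
    {E₁ E₂ E₃ : Type*}
    [TopologicalSpace E₁] [PolishSpace E₁] [MeasurableSpace E₁] [BorelSpace E₁]
    [TopologicalSpace E₂] [PolishSpace E₂] [MeasurableSpace E₂] [BorelSpace E₂]
    [TopologicalSpace E₃] [PolishSpace E₃] [MeasurableSpace E₃] [BorelSpace E₃]
    {Ω : ℕ → Type*} [∀ m, MeasurableSpace (Ω m)]
    (P : ∀ m, Measure (Ω m)) (hP : ∀ m, IsProbabilityMeasure (P m))
    {Ω' : Type*} [MeasurableSpace Ω']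
    (P' : Measure Ω') (hP' : IsProbabilityMeasure P')
    (Y : ∀ m, Ω m → E₁) (Z : ∀ m, Ω m → E₂) (Y' : Ω' → E₁) (Z' : Ω' → E₂)
    (hY : ∀ m, Measurable (Y m)) (hZ : ∀ m, Measurable (Z m))
    (hY' : Measurable Y') (hZ' : Measurable Z')
    (f : E₂ → E₃) (hf : Measurable f)
    (hconv1 : ∀ g : E₁ × E₂ →ᵇ ℝ,
      Tendsto (fun m => ∫ ω, g (Y m ω, Z m ω) ∂(P m)) atTop
        (𝓝 (∫ ω, g (Y' ω, Z' ω) ∂P')))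
    (hconv2 : ∀ g : E₂ × E₃ →ᵇ ℝ,
      Tendsto (fun m => ∫ ω, g (Z m ω, f (Z m ω)) ∂(P m)) atTop
        (𝓝 (∫ ω, g (Z' ω, f (Z' ω)) ∂P'))) :
    ∀ g : E₁ × E₂ × E₃ →ᵇ ℝ,
      Tendsto (fun m => ∫ ω, g (Y m ω, Z m ω, f (Z m ω)) ∂(P m)) atTop
        (𝓝 (∫ ω, g (Y' ω, Z' ω, f (Z' ω)) ∂P')) := by
  classical
  letI := TopologicalSpace.upgradeIsCompletelyMetrizable E₁
  letI := TopologicalSpace.upgradeIsCompletelyMetrizable E₂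
  letI := TopologicalSpace.upgradeIsCompletelyMetrizable E₃
  haveI : ∀ m, IsProbabilityMeasure (P m) := hP
  haveI : IsProbabilityMeasure P' := hP'
  -- nonemptiness
  haveI hΩ' : Nonempty Ω' := by
    by_contra h
    rw [not_nonempty_iff] at h
    have h0 : P' univ = 1 := measure_univ
    rw [Set.univ_eq_empty_iff.2 h, measure_empty] at h0
    exact zero_ne_one h0
  haveI hE₃ : Nonempty E₃ := ⟨f (Z' (Classical.arbitrary Ω'))⟩
  -- measurable maps
  have hφ : ∀ m, Measurable (fun ω => (Y m ω, Z m ω)) := fun m => (hY m).prodMk (hZ m)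
  have hψ : ∀ m, Measurable (fun ω => (Z m ω, f (Z m ω))) :=
    fun m => (hZ m).prodMk (hf.comp (hZ m))
  have hτ : ∀ m, Measurable (fun ω => (Y m ω, Z m ω, f (Z m ω))) :=
    fun m => (hY m).prodMk ((hZ m).prodMk (hf.comp (hZ m)))
  have hφ' : Measurable (fun ω => (Y' ω, Z' ω)) := hY'.prodMk hZ'
  have hψ' : Measurable (fun ω => (Z' ω, f (Z' ω))) := hZ'.prodMk (hf.comp hZ')
  have hτ' : Measurable (fun ω => (Y' ω, Z' ω, f (Z' ω))) :=
    hY'.prodMk (hZ'.prodMk (hf.comp hZ'))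
  -- probability measures
  set ν : ℕ → ProbabilityMeasure (E₁ × E₂) :=
    fun m => ⟨(P m).map (fun ω => (Y m ω, Z m ω)),
      Measure.isProbabilityMeasure_map (hφ m).aemeasurable⟩ with hν
  set ν' : ProbabilityMeasure (E₁ × E₂) :=
    ⟨P'.map (fun ω => (Y' ω, Z' ω)), Measure.isProbabilityMeasure_map hφ'.aemeasurable⟩ with hν'
  set ρ : ℕ → ProbabilityMeasure (E₂ × E₃) :=
    fun m => ⟨(P m).map (fun ω => (Z m ω, f (Z m ω))),
      Measure.isProbabilityMeasure_map (hψ m).aemeasurable⟩ with hρ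
  set ρ' : ProbabilityMeasure (E₂ × E₃) :=
    ⟨P'.map (fun ω => (Z' ω, f (Z' ω))), Measure.isProbabilityMeasure_map hψ'.aemeasurable⟩ with hρ'
  set μs : ℕ → ProbabilityMeasure (E₁ × E₂ × E₃) :=
    fun m => ⟨(P m).map (fun ω => (Y m ω, Z m ω, f (Z m ω))),
      Measure.isProbabilityMeasure_map (hτ m).aemeasurable⟩ with hμs
  set μ' : ProbabilityMeasure (E₁ × E₂ × E₃) :=
    ⟨P'.map (fun ω => (Y' ω, Z' ω, f (Z' ω))), Measure.isProbabilityMeasure_map hτ'.aemeasurable⟩ with hμ'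
  -- weak convergence hypotheses as ProbabilityMeasure convergence
  have h1 : Tendsto ν atTop (𝓝 ν') := by
    rw [ProbabilityMeasure.tendsto_iff_forall_integral_tendsto]
    intro g
    have hl : ∀ m, ∫ x, g x ∂((ν m) : Measure (E₁ × E₂)) = ∫ ω, g (Y m ω, Z m ω) ∂(P m) :=
      fun m => integral_map (hφ m).aemeasurable g.continuous.measurable.aestronglyMeasurable
    have hr : ∫ x, g x ∂(ν' : Measure (E₁ × E₂)) = ∫ ω, g (Y' ω, Z' ω) ∂P' :=
      integral_map hφ'.aemeasurable g.continuous.measurable.aestronglyMeasurable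
    simp only [hl, hr]
    exact hconv1 g
  have h2 : Tendsto ρ atTop (𝓝 ρ') := by
    rw [ProbabilityMeasure.tendsto_iff_forall_integral_tendsto]
    intro g
    have hl : ∀ m, ∫ x, g x ∂((ρ m) : Measure (E₂ × E₃)) = ∫ ω, g (Z m ω, f (Z m ω)) ∂(P m) :=
      fun m => integral_map (hψ m).aemeasurable g.continuous.measurable.aestronglyMeasurable
    have hr : ∫ x, g x ∂(ρ' : Measure (E₂ × E₃)) = ∫ ω, g (Z' ω, f (Z' ω)) ∂P' :=
      integral_map hψ'.aemeasurable g.continuous.measurable.aestronglyMeasurable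
    simp only [hl, hr]
    exact hconv2 g
  -- coercion lemmas
  have hcoe_ν : ∀ m, ((ν m : Measure (E₁ × E₂))) = (P m).map (fun ω => (Y m ω, Z m ω)) :=
    fun m => rfl
  have hcoe_ν' : ((ν' : Measure (E₁ × E₂))) = P'.map (fun ω => (Y' ω, Z' ω)) := rfl
  have hcoe_ρ : ∀ m, ((ρ m : Measure (E₂ × E₃))) = (P m).map (fun ω => (Z m ω, f (Z m ω))) :=
    fun m => rfl
  have hcoe_ρ' : ((ρ' : Measure (E₂ × E₃))) = P'.map (fun ω => (Z' ω, f (Z' ω))) := rfl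
  have hcoe_μs : ∀ m, ((μs m : Measure (E₁ × E₂ × E₃)))
      = (P m).map (fun ω => (Y m ω, Z m ω, f (Z m ω))) := fun m => rfl
  have hcoe_μ' : ((μ' : Measure (E₁ × E₂ × E₃)))
      = P'.map (fun ω => (Y' ω, Z' ω, f (Z' ω))) := rfl
  -- the law of Z'
  set lawZ : Measure E₂ := P'.map Z' with hlawZ
  haveI : IsProbabilityMeasure lawZ := Measure.isProbabilityMeasure_map hZ'.aemeasurable
  -- Key step: liminf inequality for open sets, at the level of `Measure`s (`ℝ≥0∞`-valued).
  have key : ∀ G : Set (E₁ × E₂ × E₃), IsOpen G →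
      (μ' : Measure (E₁ × E₂ × E₃)) G ≤ atTop.liminf (fun m => (μs m : Measure _) G) := by
    intro G hG
    rcases eq_empty_or_nonempty Gᶜ with hGc | hGcne
    · have hGuniv : G = univ := by rwa [compl_empty_iff] at hGc
      subst hGuniv
      have hl : atTop.liminf (fun m => (μs m : Measure (E₁ × E₂ × E₃)) univ) = 1 := by
        simp only [measure_univ]
        exact liminf_const 1
      rw [hl, measure_univ]
    refine ENNReal.le_of_forall_pos_le_add (fun ε hε hlim => ?_)
    set η : ℝ≥0∞ := (ε : ℝ≥0∞) / 4 with hηdef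
    have hη0 : η ≠ 0 := by
      simp only [hηdef, ne_eq, ENNReal.div_eq_zero_iff]
      push_neg
      exact ⟨by exact_mod_cast hε.ne', by norm_num⟩
    have hη4 : η + η + η + η ≤ (ε : ℝ≥0∞) := by
      have h44 : η + η + η + η = 4 * ((ε : ℝ≥0∞) / 4) := by rw [hηdef]; ring
      rw [h44]
      exact ENNReal.mul_div_le
    have hηε : η ≤ (ε : ℝ≥0∞) := by
      refine le_trans ?_ hη4
      calc η ≤ η + η := self_le_add_right _ _
        _ ≤ η + η + η := self_le_add_right _ _
        _ ≤ η + η + η + η := self_le_add_right _ _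
    -- Lusin's theorem for f with respect to the law of Z'
    obtain ⟨K, hKcomp, hKμ, hKf⟩ := aux_lusin lawZ hf hη0
    have hKmeas : MeasurableSet K := hKcomp.isClosed.measurableSet
    rcases K.eq_empty_or_nonempty with hKemp | hKne
    · -- then the whole space has lawZ-measure ≤ η, a trivial case
      have h1' : (1 : ℝ≥0∞) ≤ η := by
        have := hKμ
        rw [hKemp, compl_empty] at this
        rwa [measure_univ] at this
      have : (μ' : Measure (E₁ × E₂ × E₃)) G ≤ (ε : ℝ≥0∞) :=
        le_trans prob_le_one (le_trans h1' hηε)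
      exact this.trans le_add_self
    -- the good set A in E₁ × E₂
    set T : E₁ × E₂ → E₁ × E₂ × E₃ := fun p => (p.1, p.2, f p.2) with hTdef
    have hTmeas : Measurable T :=
      measurable_fst.prodMk (measurable_snd.prodMk (hf.comp measurable_snd))
    set A : Set (E₁ × E₂) := (Prod.snd ⁻¹' K) ∩ (T ⁻¹' G) with hAdef
    have hAmeas : MeasurableSet A :=
      (hKmeas.preimage measurable_snd).inter (hG.measurableSet.preimage hTmeas)
    -- step 1 : μ' G ≤ ν' A + lawZ Kᶜ
    have ineq1 : (μ' : Measure (E₁ × E₂ × E₃)) G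
        ≤ (ν' : Measure (E₁ × E₂)) A + lawZ Kᶜ := by
      rw [hcoe_μ', hcoe_ν', hlawZ, Measure.map_apply hτ' hG.measurableSet,
        Measure.map_apply hφ' hAmeas, Measure.map_apply hZ' hKmeas.compl]
      refine le_trans (measure_mono ?_) (measure_union_le _ _)
      intro ω hω
      by_cases hK' : Z' ω ∈ K
      · exact Or.inl ⟨hK', hω⟩
      · exact Or.inr hK'
    -- step 2 : compact K₂ ⊆ A almost filling A
    obtain ⟨K₂, hK₂A, hK₂comp, hK₂⟩ := aux_inner (ν' : Measure (E₁ × E₂)) hAmeas hη0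
    rcases K₂.eq_empty_or_nonempty with hK₂emp | hK₂ne
    · -- A has small measure, trivial case
      have hA_small : (ν' : Measure (E₁ × E₂)) A ≤ η := by
        have := hK₂
        rwa [hK₂emp, measure_empty, zero_add] at this
      have : (μ' : Measure (E₁ × E₂ × E₃)) G ≤ (ε : ℝ≥0∞) := by
        refine le_trans ineq1 (le_trans (add_le_add hA_small hKμ) ?_)
        calc η + η ≤ η + η + η := self_le_add_right _ _
          _ ≤ η + η + η + η := self_le_add_right _ _
          _ ≤ (ε : ℝ≥0∞) := hη4
      exact this.trans le_add_self
    -- step 3: a uniform margin δ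
    have hK₂K : K₂ ⊆ Prod.snd ⁻¹' K := fun p hp => (hK₂A hp).1
    have hTcont : ContinuousOn T (Prod.snd ⁻¹' K) := by
      apply ContinuousOn.prodMk continuous_fst.continuousOn
      apply ContinuousOn.prodMk continuous_snd.continuousOn
      exact hKf.comp continuous_snd.continuousOn (fun p hp => hp)
    set D : E₁ × E₂ → ℝ := fun p => infDist (T p) Gᶜ with hDdef
    have hDcont : ContinuousOn D K₂ :=
      ((continuous_infDist_pt Gᶜ).comp_continuousOn hTcont).mono hK₂K
    obtain ⟨p₀, hp₀K₂, hp₀min⟩ := hK₂comp.exists_isMinOn hK₂ne hDcont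
    have hDp₀pos : 0 < D p₀ := by
      have hmem : T p₀ ∈ G := (hK₂A hp₀K₂).2
      exact (hG.isClosed_compl.notMem_iff_infDist_pos hGcne).1 (by simpa using hmem)
    set δ₀ : ℝ := D p₀ / 3 with hδ₀def
    have hδ₀pos : 0 < δ₀ := by positivity
    have hUC := hKcomp.uniformContinuousOn_of_continuous hKf
    rw [Metric.uniformContinuousOn_iff] at hUC
    obtain ⟨θ, hθpos, hθ⟩ := hUC δ₀ hδ₀pos
    set δ : ℝ := min (δ₀ / 2) (θ / 2) with hδdef
    have hδpos : 0 < δ := lt_min (by positivity) (by positivity)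
    have hδδ₀ : δ ≤ δ₀ / 2 := min_le_left _ _
    have hδθ : δ ≤ θ / 2 := min_le_right _ _
    set Γ : Set (E₂ × E₃) := (fun z => (z, f z)) '' K with hΓdef
    have hΓne : Γ.Nonempty := hKne.image _
    -- the geometric key lemma
    have geom : ∀ p : E₁ × E₂, ∀ w : E₃,
        p ∈ thickening δ K₂ → infDist (p.2, w) Γ < δ → (p.1, p.2, w) ∈ G := by
      intro p w hp hw
      obtain ⟨q, hqK₂, hpq⟩ := mem_thickening_iff.1 hp
      obtain ⟨r, hrΓ, hwr⟩ := (infDist_lt_iff hΓne).1 hw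
      obtain ⟨z₁, hz₁K, rfl⟩ := hrΓ
      have hq2K : q.2 ∈ K := (hK₂A hqK₂).1
      have h11 : dist p.1 q.1 < δ :=
        lt_of_le_of_lt (by rw [Prod.dist_eq]; exact le_max_left _ _) hpq
      have h22 : dist p.2 q.2 < δ :=
        lt_of_le_of_lt (by rw [Prod.dist_eq]; exact le_max_right _ _) hpq
      have h2z : dist p.2 z₁ < δ :=
        lt_of_le_of_lt (by rw [Prod.dist_eq]; exact le_max_left _ _) hwr
      have hwz : dist w (f z₁) < δ :=
        lt_of_le_of_lt (by rw [Prod.dist_eq]; exact le_max_right _ _) hwr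
      have hqz : dist q.2 z₁ < θ := by
        have ht := dist_triangle q.2 p.2 z₁
        have h22' : dist q.2 p.2 < δ := by rwa [dist_comm] at h22
        linarith
      have hfq : dist (f q.2) (f z₁) < δ₀ := hθ q.2 hq2K z₁ hz₁K hqz
      have hwfq : dist w (f q.2) < δ + δ₀ := by
        have ht := dist_triangle w (f z₁) (f q.2)
        have hfq' : dist (f z₁) (f q.2) < δ₀ := by rwa [dist_comm] at hfq
        linarith
      by_contra hnG
      have hle : D q ≤ dist (T q) ((p.1, p.2, w) : E₁ × E₂ × E₃) :=
        infDist_le_dist_of_mem hnG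
      have hdist : dist (T q) ((p.1, p.2, w) : E₁ × E₂ × E₃) < δ + δ₀ := by
        rw [Prod.dist_eq]
        apply max_lt
        · have : dist q.1 p.1 < δ := by rwa [dist_comm] at h11
          linarith
        · rw [Prod.dist_eq]
          apply max_lt
          · have : dist q.2 p.2 < δ := by rwa [dist_comm] at h22
            linarith
          · have : dist (f q.2) w < δ + δ₀ := by rwa [dist_comm] at hwfq
            exact this
      have h3 : D p₀ ≤ D q := hp₀min hqK₂
      linarith
    -- the open and closed test sets
    set U : Set (E₁ × E₂) := thickening δ K₂ with hUdef
    have hUopen : IsOpen U := isOpen_thickening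
    have hK₂U : K₂ ⊆ U := self_subset_thickening hδpos _
    set C : Set (E₂ × E₃) := {q : E₂ × E₃ | δ ≤ infDist q Γ} with hCdef
    have hCclosed : IsClosed C := isClosed_le continuous_const (continuous_infDist_pt Γ)
    -- comparison of measures for each m
    have ineq_m : ∀ m, (ν m : Measure (E₁ × E₂)) U
        ≤ (μs m : Measure (E₁ × E₂ × E₃)) G + (ρ m : Measure (E₂ × E₃)) C := by
      intro m
      rw [hcoe_ν m, hcoe_μs m, hcoe_ρ m, Measure.map_apply (hφ m) hUopen.measurableSet,
        Measure.map_apply (hτ m) hG.measurableSet,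
        Measure.map_apply (hψ m) hCclosed.measurableSet]
      refine le_trans (measure_mono ?_) (measure_union_le _ _)
      intro ω hω
      by_cases hC' : (Z m ω, f (Z m ω)) ∈ C
      · exact Or.inr hC'
      · refine Or.inl ?_
        have hlt : infDist (Z m ω, f (Z m ω)) Γ < δ := not_le.1 hC'
        exact geom (Y m ω, Z m ω) (f (Z m ω)) hω hlt
    -- the limit pair (Z', f ∘ Z') is concentrated near the graph over K
    have hρ'C : (ρ' : Measure (E₂ × E₃)) C ≤ lawZ Kᶜ := by
      rw [hcoe_ρ', hlawZ, Measure.map_apply hψ' hCclosed.measurableSet,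
        Measure.map_apply hZ' hKmeas.compl]
      apply measure_mono
      intro ω hω
      intro hK'
      have hmemΓ : (Z' ω, f (Z' ω)) ∈ Γ := mem_image_of_mem _ hK'
      have h0 : infDist (Z' ω, f (Z' ω)) Γ = 0 := infDist_zero_of_mem hmemΓ
      have : δ ≤ (0:ℝ) := by rw [← h0]; exact hω
      linarith
    -- portmanteau inequalities
    have pt1 : (ν' : Measure (E₁ × E₂)) U
        ≤ atTop.liminf (fun m => (ν m : Measure (E₁ × E₂)) U) :=
      ProbabilityMeasure.le_liminf_measure_open_of_tendsto h1 hUopen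
    have pt2 : atTop.limsup (fun m => (ρ m : Measure (E₂ × E₃)) C)
        ≤ (ρ' : Measure (E₂ × E₃)) C :=
      ProbabilityMeasure.limsup_measure_closed_le_of_tendsto h2 hCclosed
    -- eventually ρ m C is small
    have hev : ∀ᶠ m in atTop, (ρ m : Measure (E₂ × E₃)) C < lawZ Kᶜ + η :=
      eventually_lt_of_limsup_lt
        (lt_of_le_of_lt (pt2.trans hρ'C) (ENNReal.lt_add_right (measure_ne_top _ _) hη0))
    -- liminf comparison
    have lim_le : atTop.liminf (fun m => (ν m : Measure (E₁ × E₂)) U)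
        ≤ atTop.liminf (fun m => (μs m : Measure (E₁ × E₂ × E₃)) G) + (lawZ Kᶜ + η) := by
      have hev' : ∀ᶠ m in atTop, (ν m : Measure (E₁ × E₂)) U
          ≤ (μs m : Measure (E₁ × E₂ × E₃)) G + (lawZ Kᶜ + η) := by
        filter_upwards [hev] with m hm
        exact le_trans (ineq_m m) (add_le_add_right hm.le _)
      refine le_trans (liminf_le_liminf hev') (le_of_eq ?_)
      exact liminf_add_const atTop (fun m => (μs m : Measure (E₁ × E₂ × E₃)) G) _
        (IsBoundedUnder.isCoboundedUnder_ge (isBoundedUnder_of ⟨1, fun m => prob_le_one⟩))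
        (isBoundedUnder_of ⟨0, fun m => zero_le⟩)
    -- put everything together
    calc (μ' : Measure (E₁ × E₂ × E₃)) G
        ≤ (ν' : Measure (E₁ × E₂)) A + lawZ Kᶜ := ineq1
      _ ≤ ((ν' : Measure (E₁ × E₂)) K₂ + η) + lawZ Kᶜ := by gcongr
      _ ≤ ((ν' : Measure (E₁ × E₂)) U + η) + lawZ Kᶜ :=
          add_le_add_left (add_le_add_left (measure_mono hK₂U) η) _
      _ ≤ (atTop.liminf (fun m => (ν m : Measure (E₁ × E₂)) U) + η) + lawZ Kᶜ := by gcongr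
      _ ≤ ((atTop.liminf (fun m => (μs m : Measure (E₁ × E₂ × E₃)) G) + (lawZ Kᶜ + η)) + η)
            + lawZ Kᶜ := by gcongr
      _ ≤ ((atTop.liminf (fun m => (μs m : Measure (E₁ × E₂ × E₃)) G) + (η + η)) + η) + η := by
          gcongr <;> exact hKμ
      _ = atTop.liminf (fun m => (μs m : Measure (E₁ × E₂ × E₃)) G) + (η + η + η + η) := by
          ring
      _ ≤ atTop.liminf (fun m => (μs m : Measure (E₁ × E₂ × E₃)) G) + (ε : ℝ≥0∞) := by gcongr
  -- convert to convergence of probability measures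
  have h3 : Tendsto μs atTop (𝓝 μ') := by
    apply tendsto_of_forall_isOpen_le_liminf
    intro G hG
    have hkey := key G hG
    have aux : (ENNReal.ofNNReal (atTop.liminf fun m => μs m G)) =
        atTop.liminf (ENNReal.ofNNReal ∘ fun m => μs m G) := by
      refine Monotone.map_liminf_of_continuousAt (F := atTop) ENNReal.coe_mono (fun m => μs m G)
        ENNReal.continuous_coe.continuousAt ?_ ?_
      · exact IsBoundedUnder.isCoboundedUnder_ge ⟨1, by simp⟩
      · exact ⟨0, by simp⟩
    rw [← ENNReal.coe_le_coe, aux]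
    simp only [Function.comp_def, ProbabilityMeasure.ennreal_coeFn_eq_coeFn_toMeasure]
    exact hkey
  -- convert back to integrals of bounded continuous functions
  intro g
  have hint := ProbabilityMeasure.tendsto_iff_forall_integral_tendsto.mp h3 g
  have hl : ∀ m, ∫ x, g x ∂((μs m) : Measure (E₁ × E₂ × E₃))
      = ∫ ω, g (Y m ω, Z m ω, f (Z m ω)) ∂(P m) :=
    fun m => integral_map (hτ m).aemeasurable g.continuous.measurable.aestronglyMeasurable
  have hr : ∫ x, g x ∂(μ' : Measure (E₁ × E₂ × E₃)) = ∫ ω, g (Y' ω, Z' ω, f (Z' ω)) ∂P' :=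
    integral_map hτ'.aemeasurable g.continuous.measurable.aestronglyMeasurable
  simp only [hl, hr] at hint
  exact hint
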